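/- Let n ≥ 2 and let 𝓗 ⊆ ℝ^n be the Schur cone. Then min{⟨x,y⟩ : x ∈ 𝓗, ‖x‖ = 1, y ∈ ℝ^n, y ≥ 0, ‖y‖ = 1} = −√(1 − 1/n), and the unique minimizing pair is y = e_n and x = √(n/(n−1)) · (e/n − e_n), where e is the all-ones vector and e_n the n-th canonical basis vector. -/

import Mathlib

set_option maxHeartbeats 1000000

open Matrix

/-- Euclidean norm of a vector in `ℝ^n`. -/
noncomputable def vnorm {n : ℕ} (v : Fin n → ℝ) : ℝ := Real.sqrt (v ⬝ᵥ v)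

/-- The Schur cone in `ℝ^n`: the convex cone generated by the vectors `e_i - e_{i+1}`,
`i = 1, …, n-1` (here written with 0-based indices). -/
def schurCone (n : ℕ) : Set (Fin n → ℝ) :=
  {x | ∃ c : Fin (n - 1) → ℝ, (∀ i, 0 ≤ c i) ∧
    x = ∑ i, c i • (fun j : Fin n =>
      if (j : ℕ) = (i : ℕ) then (1 : ℝ) else if (j : ℕ) = (i : ℕ) + 1 then -1 else 0)}

section Aux
open Finset

lemma schur_coord {n : ℕ} (hn : 2 ≤ n) (c : Fin (n-1) → ℝ) (j : Fin n) :
    (∑ i, c i • (fun j : Fin n =>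
      if (j : ℕ) = (i : ℕ) then (1 : ℝ) else if (j : ℕ) = (i : ℕ) + 1 then -1 else 0)) j
    = (if h : (j:ℕ) < n-1 then c ⟨j, h⟩ else 0)
      - (if h : 0 < (j:ℕ) then c ⟨(j:ℕ)-1, by omega⟩ else 0) := by
  have hj := j.isLt
  rw [Finset.sum_apply]
  have hterm : ∀ i : Fin (n-1),
      (c i • (fun j : Fin n =>
        if (j : ℕ) = (i : ℕ) then (1 : ℝ) else if (j : ℕ) = (i : ℕ) + 1 then -1 else 0)) j
      = (if (j:ℕ) = (i:ℕ) then c i else 0) - (if (j:ℕ) = (i:ℕ)+1 then c i else 0) := by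
    intro i
    simp only [Pi.smul_apply, smul_eq_mul]
    rcases eq_or_ne (j:ℕ) (i:ℕ) with h1 | h1
    · rw [if_pos h1, if_pos h1, if_neg (by omega)]; ring
    · rcases eq_or_ne (j:ℕ) ((i:ℕ)+1) with h2 | h2 <;> simp [h1, h2]
  rw [Finset.sum_congr rfl (fun i _ => hterm i), Finset.sum_sub_distrib]
  congr 1
  · by_cases h : (j:ℕ) < n - 1
    · rw [dif_pos h]
      rw [Finset.sum_eq_single (⟨(j:ℕ), h⟩ : Fin (n-1))]
      · rw [if_pos rfl]
      · intro b _ hb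
        rw [if_neg]
        intro hc; exact hb (Fin.ext hc.symm)
      · intro hb; exact absurd (Finset.mem_univ _) hb
    · rw [dif_neg h, Finset.sum_eq_zero]
      intro i _
      rw [if_neg]
      intro hc; exact h (hc ▸ i.isLt)
  · by_cases h : 0 < (j:ℕ)
    · rw [dif_pos h]
      have hlt : (j:ℕ) - 1 < n - 1 := by omega
      rw [Finset.sum_eq_single (⟨(j:ℕ)-1, hlt⟩ : Fin (n-1))]
      · rw [if_pos (by simp; omega)]
      · intro b _ hb
        rw [if_neg]
        intro hc
        exact hb (Fin.ext (by simp; omega))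
      · intro hb; exact absurd (Finset.mem_univ _) hb
    · rw [dif_neg h, Finset.sum_eq_zero]
      intro i _
      rw [if_neg]; omega

lemma schur_facts {n : ℕ} (hn : 2 ≤ n) {x : Fin n → ℝ} (hx : x ∈ schurCone n) :
    (∑ j, x j = 0) ∧ (∀ j : Fin n, -x j ≤ ∑ i, max (x i) 0) ∧ x ⟨n-1, Nat.sub_lt (by omega) Nat.one_pos⟩ ≤ 0 := by
  obtain ⟨c, hc, hxe⟩ := hx
  have hco : ∀ j : Fin n, x j = (if h : (j:ℕ) < n-1 then c ⟨j, h⟩ else 0)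
      - (if h : 0 < (j:ℕ) then c ⟨(j:ℕ)-1, by omega⟩ else 0) :=
    fun j => by rw [hxe]; exact schur_coord hn c j
  set f : ℕ → ℝ := fun m => if h : 0 < m ∧ m - 1 < n - 1 then c ⟨m-1, h.2⟩ else 0 with hf
  set xb : ℕ → ℝ := fun m => if h : m < n then x ⟨m, h⟩ else 0 with hxb
  have hstep : ∀ m : ℕ, m < n → xb m = f (m+1) - f m := by
    intro m hm
    rw [hxb]
    simp only
    rw [dif_pos hm, hco ⟨m, hm⟩]
    congr 1
    · simp only [hf]
      by_cases h : m < n - 1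
      · rw [dif_pos h, dif_pos ⟨Nat.succ_pos m, by simpa using h⟩]
        exact congrArg c (Fin.ext (by simp))
      · rw [dif_neg h, dif_neg (by simp; omega)]
    · simp only [hf]
      by_cases h : 0 < m
      · rw [dif_pos h, dif_pos ⟨h, by omega⟩]
      · rw [dif_neg h, dif_neg (by omega)]
  have hpartial : ∀ K : ℕ, K ≤ n → ∑ m ∈ range K, xb m = f K := by
    intro K hK
    rw [Finset.sum_congr rfl (fun m hm => hstep m (lt_of_lt_of_le (mem_range.mp hm) hK)),
      Finset.sum_range_sub f K]
    simp [hf]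
  have hxsum : ∀ j : Fin n, x j = xb (j:ℕ) := fun j => by
    rw [hxb]; simp only; rw [dif_pos j.isLt]
  have hP0 : ∀ i : Fin n, (0:ℝ) ≤ max (x i) 0 := fun i => le_max_right _ _
  have hab : ∀ m : ℕ, m ∈ range n → xb m ≤
      (fun m => if h : m < n then max (x ⟨m, h⟩) 0 else 0) m := by
    intro m hm
    have hmn := mem_range.mp hm
    simp only [hxb, dif_pos hmn]
    exact le_max_left _ _
  have hPsum : ∑ m ∈ range n, (fun m => if h : m < n then max (x ⟨m,h⟩) 0 else 0) m
      = ∑ i : Fin n, max (x i) 0 := by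
    rw [← Fin.sum_univ_eq_sum_range]
    exact Finset.sum_congr rfl (fun i _ => by simp)
  refine ⟨?_, ?_, ?_⟩
  · rw [Finset.sum_congr rfl (fun j _ => hxsum j), Fin.sum_univ_eq_sum_range,
      hpartial n le_rfl]
    rw [hf]; simp
  · intro j
    have hA : (0:ℝ) ≤ (if h : (j:ℕ) < n-1 then c ⟨j, h⟩ else 0) := by
      split_ifs with h; exacts [hc _, le_rfl]
    have hfj : f (j:ℕ) = (if h : 0 < (j:ℕ) then c ⟨(j:ℕ)-1, by omega⟩ else 0) := by
      have hj := j.isLt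
      simp only [hf]
      by_cases h : 0 < (j:ℕ)
      · rw [dif_pos ⟨h, by omega⟩, dif_pos h]
      · rw [dif_neg (by omega), dif_neg h]
    have h1 : -x j ≤ f (j:ℕ) := by
      rw [hfj, hco j]
      linarith
    have h2 : f (j:ℕ) ≤ ∑ i : Fin n, max (x i) 0 := by
      rw [← hpartial (j:ℕ) (le_of_lt j.isLt), ← hPsum]
      calc ∑ m ∈ range (j:ℕ), xb m
          ≤ ∑ m ∈ range (j:ℕ), (fun m => if h : m < n then max (x ⟨m,h⟩) 0 else 0) m := by
            refine Finset.sum_le_sum (fun m hm => hab m ?_)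
            exact mem_range.mpr (lt_of_lt_of_le (mem_range.mp hm) (le_of_lt j.isLt))
        _ ≤ ∑ m ∈ range n, (fun m => if h : m < n then max (x ⟨m,h⟩) 0 else 0) m := by
            refine Finset.sum_le_sum_of_subset_of_nonneg
              (Finset.range_subset_range.mpr (le_of_lt j.isLt)) (fun m hm _ => ?_)
            have hmn := mem_range.mp hm
            simp only [dif_pos hmn]
            exact le_max_right _ _
    linarith
  · rw [hco ⟨n-1, by omega⟩]
    have : ¬ ((n-1 : ℕ) < n - 1) := lt_irrefl _
    rw [dif_neg this]
    have hB : (0:ℝ) ≤ (if h : 0 < ((⟨n-1, by omega⟩ : Fin n):ℕ) then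
        c ⟨((⟨n-1, by omega⟩ : Fin n):ℕ)-1, by omega⟩ else 0) := by
      split_ifs with h; exacts [hc _, le_rfl]
    linarith

lemma key {n : ℕ} (hn : 2 ≤ n) (x y : Fin n → ℝ)
    (hsum : ∑ j, x j = 0)
    (hbd : ∀ j : Fin n, -x j ≤ ∑ i, max (x i) 0)
    (hlast : x ⟨n-1, Nat.sub_lt (by omega) Nat.one_pos⟩ ≤ 0)
    (hx1 : ∑ j, x j ^ 2 = 1)
    (hy : ∀ j, 0 ≤ y j) (hy1 : ∑ j, y j ^ 2 = 1) :
    -Real.sqrt (1 - 1/(n:ℝ)) ≤ ∑ j, x j * y j ∧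
    (∑ j, x j * y j = -Real.sqrt (1 - 1/(n:ℝ)) →
      (∀ j : Fin n, x j = if j = ⟨n-1, Nat.sub_lt (by omega) Nat.one_pos⟩ then -Real.sqrt (1 - 1/(n:ℝ))
          else Real.sqrt (1 - 1/(n:ℝ)) / ((n:ℝ)-1)) ∧
      (∀ j : Fin n, y j = if j = ⟨n-1, Nat.sub_lt (by omega) Nat.one_pos⟩ then 1 else 0)) := by
  have hnR : (2:ℝ) ≤ (n:ℝ) := by exact_mod_cast hn
  have hn0 : (0:ℝ) < (n:ℝ) := by linarith
  have hn1 : (0:ℝ) < (n:ℝ) - 1 := by linarith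
  set last : Fin n := ⟨n-1, by omega⟩ with hlastdef
  set a : Fin n → ℝ := fun j => max (x j) 0 with hadef
  set b : Fin n → ℝ := fun j => max (-x j) 0 with hbdef
  have ha0 : ∀ j, 0 ≤ a j := fun j => le_max_right _ _
  have hb0 : ∀ j, 0 ≤ b j := fun j => le_max_right _ _
  have hax : ∀ j, x j = a j - b j := by
    intro j
    simp only [hadef, hbdef]
    rcases le_total 0 (x j) with h | h
    · rw [max_eq_left h, max_eq_right (by linarith)]; ring
    · rw [max_eq_right h, max_eq_left (by linarith)]; ring
  have hab0 : ∀ j, a j * b j = 0 := by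
    intro j
    simp only [hadef, hbdef]
    rcases le_total 0 (x j) with h | h
    · rw [max_eq_right (a := -x j) (by linarith)]; ring
    · rw [max_eq_right (a := x j) h]; ring
  have hsq : ∀ j, x j ^ 2 = a j ^ 2 + b j ^ 2 := by
    intro j
    have h2 := hab0 j
    rw [hax j]
    nlinarith [h2]
  set P : ℝ := ∑ j, a j with hPdef
  have hP0 : 0 ≤ P := Finset.sum_nonneg (fun j _ => ha0 j)
  have hPb : ∑ j, b j = P := by
    have h : ∑ j, (a j - b j) = 0 := by
      rw [← hsum]; exact Finset.sum_congr rfl (fun j _ => (hax j).symm)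
    rw [Finset.sum_sub_distrib] at h
    simp only [← hPdef] at h
    linarith
  have hbP : ∀ j, b j ≤ P := by
    intro j
    exact max_le (hbd j) hP0
  have halast : a last = 0 := max_eq_right hlast
  have hsumsq : ∑ j, a j ^ 2 + ∑ j, b j ^ 2 = 1 := by
    calc ∑ j, a j ^ 2 + ∑ j, b j ^ 2 = ∑ j, (a j ^ 2 + b j ^ 2) :=
          Finset.sum_add_distrib.symm
      _ = ∑ j, x j ^ 2 := Finset.sum_congr rfl (fun j _ => (hsq j).symm)
      _ = 1 := hx1
  have hQ1 : ∑ j, b j ^ 2 ≤ P ^ 2 := by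
    calc ∑ j, b j ^ 2 ≤ ∑ j, P * b j :=
          Finset.sum_le_sum (fun j _ => by
            rw [pow_two]; exact mul_le_mul_of_nonneg_right (hbP j) (hb0 j))
      _ = P ^ 2 := by rw [← Finset.mul_sum, hPb, pow_two]
  have hcard : ((Finset.univ.erase last).card : ℝ) = (n:ℝ) - 1 := by
    rw [Finset.card_erase_of_mem (mem_univ _), Finset.card_univ, Fintype.card_fin]
    have : (1:ℕ) ≤ n := by omega
    push_cast [Nat.cast_sub this]
    ring
  have hPs : ∑ j ∈ Finset.univ.erase last, a j = P := by
    have := Finset.sum_erase_add Finset.univ a (mem_univ last)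
    rw [halast, add_zero] at this
    exact this
  have hQ2 : P ^ 2 ≤ ((n:ℝ) - 1) * ∑ j, a j ^ 2 := by
    have h1 : (∑ j ∈ Finset.univ.erase last, a j) ^ 2 ≤
        ((Finset.univ.erase last).card : ℝ) * ∑ j ∈ Finset.univ.erase last, a j ^ 2 := by
      exact sq_sum_le_card_mul_sum_sq
    rw [hPs, hcard] at h1
    refine h1.trans (mul_le_mul_of_nonneg_left ?_ (by linarith))
    exact Finset.sum_le_sum_of_subset_of_nonneg (Finset.subset_univ _)
      (fun j _ _ => sq_nonneg _)
  have hbb : ∑ j, b j ^ 2 ≤ 1 - 1/(n:ℝ) := by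
    have h1 : P ^ 2 ≤ ((n:ℝ) - 1) * (1 - ∑ j, b j ^ 2) := by
      rw [show 1 - ∑ j, b j ^ 2 = ∑ j, a j ^ 2 by linarith]; exact hQ2
    have h2 : (n:ℝ) * ∑ j, b j ^ 2 ≤ (n:ℝ) - 1 := by nlinarith
    rw [show (1:ℝ) - 1/(n:ℝ) = ((n:ℝ)-1)/(n:ℝ) by field_simp, le_div_iff₀ hn0]
    linarith
  set Q : ℝ := Real.sqrt (1 - 1/(n:ℝ)) with hQdef
  have hQ0 : 0 ≤ Q := Real.sqrt_nonneg _
  have hQsq : Q ^ 2 = 1 - 1/(n:ℝ) := Real.sq_sqrt (by rw [sub_nonneg, div_le_one hn0]; linarith)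
  have hdot : ∑ j, x j * y j = ∑ j, a j * y j - ∑ j, b j * y j := by
    rw [← Finset.sum_sub_distrib]
    exact Finset.sum_congr rfl (fun j _ => by rw [hax j]; ring)
  have hay : 0 ≤ ∑ j, a j * y j :=
    Finset.sum_nonneg (fun j _ => mul_nonneg (ha0 j) (hy j))
  have hbyCS : ∑ j, b j * y j ≤ Real.sqrt (∑ j, b j ^ 2) := by
    have := Real.sum_mul_le_sqrt_mul_sqrt Finset.univ b y
    rw [hy1, Real.sqrt_one, mul_one] at this
    exact this
  have hsqQ : Real.sqrt (∑ j, b j ^ 2) ≤ Q := by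
    rw [hQdef]
    exact Real.sqrt_le_sqrt hbb
  have hby : ∑ j, b j * y j ≤ Q := hbyCS.trans hsqQ
  constructor
  · rw [hdot]; linarith
  intro heq
  rw [hdot] at heq
  -- equality analysis
  have hay0 : ∑ j, a j * y j = 0 := le_antisymm (by linarith) hay
  have hbyQ : ∑ j, b j * y j = Q := by linarith
  have hsb : Real.sqrt (∑ j, b j ^ 2) = Q := le_antisymm hsqQ (by linarith [hbyCS])
  have hbb2 : ∑ j, b j ^ 2 = 1 - 1/(n:ℝ) := by
    have hnn : 0 ≤ ∑ j, b j ^ 2 := Finset.sum_nonneg (fun j _ => sq_nonneg _)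
    rw [← Real.sq_sqrt hnn, hsb, hQsq]
  have haa2 : ∑ j, a j ^ 2 = 1/(n:ℝ) := by linarith
  have hPsq : P ^ 2 = 1 - 1/(n:ℝ) := by
    have h1 : ((n:ℝ) - 1) * ∑ j, a j ^ 2 = 1 - 1/(n:ℝ) := by
      rw [haa2]; field_simp
    refine le_antisymm (by linarith [hQ2]) (by linarith [hQ1])
  have hPQ : P = Q := by
    have h1 : Real.sqrt (P^2) = Real.sqrt (Q^2) := by rw [hPsq, hQsq]
    rwa [Real.sqrt_sq hP0, Real.sqrt_sq hQ0] at h1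
  have hPpos : 0 < P := by
    rcases hP0.eq_or_lt with h | h
    · exfalso; rw [← h] at hPsq; simp at hPsq
      have : 1/(n:ℝ) < 1 := by rw [div_lt_one hn0]; linarith
      nlinarith
    · exact h
  -- b is 0 or P
  have hbdich : ∀ j, b j = 0 ∨ b j = P := by
    have hzero : ∑ j, b j * (P - b j) = 0 := by
      have : ∑ j, b j * (P - b j) = P * (∑ j, b j) - ∑ j, b j ^ 2 := by
        rw [Finset.mul_sum, ← Finset.sum_sub_distrib]
        exact Finset.sum_congr rfl (fun j _ => by ring)
      rw [this, hPb]
      linear_combination hPsq - hbb2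
    intro j
    have h := (Finset.sum_eq_zero_iff_of_nonneg (fun j _ =>
      mul_nonneg (hb0 j) (by linarith [hbP j]))).mp hzero j (mem_univ j)
    rcases mul_eq_zero.mp h with h | h
    · exact Or.inl h
    · exact Or.inr (by linarith)
  -- a constant on erase last
  set t : ℝ := Q / ((n:ℝ) - 1) with htdef
  have ht0 : 0 < t := div_pos (hPQ ▸ hPpos) hn1
  have haconst : ∀ j ∈ Finset.univ.erase last, a j = t := by
    have hsa : ∑ j ∈ Finset.univ.erase last, a j ^ 2 = 1/(n:ℝ) := by
      have h := Finset.sum_erase_add Finset.univ (fun j => a j ^ 2) (mem_univ last)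
      rw [← h] at haa2
      simpa [halast] using haa2
    have hzero : ∑ j ∈ Finset.univ.erase last, (a j - t) ^ 2 = 0 := by
      have h1 : ∑ j ∈ Finset.univ.erase last, (a j - t) ^ 2 =
          (∑ j ∈ Finset.univ.erase last, a j ^ 2) -
            2 * t * (∑ j ∈ Finset.univ.erase last, a j) +
            ((Finset.univ.erase last).card : ℝ) * t ^ 2 := by
        rw [Finset.sum_congr rfl
          (fun j (_ : j ∈ Finset.univ.erase last) =>
            show (a j - t)^2 = a j^2 - 2*t*a j + t^2 from by ring),
          Finset.sum_add_distrib, Finset.sum_sub_distrib, ← Finset.mul_sum,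
          Finset.sum_const, nsmul_eq_mul]
      rw [h1, hsa, hPs, hcard, htdef, ← hPQ]
      have h2 : (n:ℝ) - 1 ≠ 0 := by linarith
      have h3 : (n:ℝ) ≠ 0 := by linarith
      have hP' : P^2 * (n:ℝ) = (n:ℝ) - 1 := by
        field_simp at hPsq; linarith
      field_simp
      linear_combination (-1:ℝ) * hP'
    intro j hj
    have h := (Finset.sum_eq_zero_iff_of_nonneg (fun j _ => sq_nonneg _)).mp hzero j hj
    have := sq_eq_zero_iff.mp h
    linarith
  -- b j = 0 off last, b last = P
  have hboff : ∀ j, j ≠ last → b j = 0 := by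
    intro j hj
    rcases hbdich j with h | h
    · exact h
    · exfalso
      have haj : a j = t := haconst j (Finset.mem_erase.mpr ⟨hj, mem_univ j⟩)
      have := hab0 j
      rw [haj, h] at this
      nlinarith
  have hblast : b last = P := by
    have h1 := Finset.sum_erase_add Finset.univ b (mem_univ last)
    have h2 : ∑ j ∈ Finset.univ.erase last, b j = 0 :=
      Finset.sum_eq_zero (fun j hj => hboff j (Finset.mem_erase.mp hj).1)
    rw [h2, zero_add] at h1
    rw [h1, hPb]
  -- y off last
  have hyoff : ∀ j, j ≠ last → y j = 0 := by
    intro j hj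
    have h := (Finset.sum_eq_zero_iff_of_nonneg (fun j _ =>
      mul_nonneg (ha0 j) (hy j))).mp hay0 j (mem_univ j)
    have haj : a j = t := haconst j (Finset.mem_erase.mpr ⟨hj, mem_univ j⟩)
    rcases mul_eq_zero.mp h with h | h
    · exact absurd h (by rw [haj]; linarith)
    · exact h
  have hylast : y last = 1 := by
    have h1 := Finset.sum_erase_add Finset.univ (fun j => y j ^ 2) (mem_univ last)
    have h2 : ∑ j ∈ Finset.univ.erase last, y j ^ 2 = 0 :=
      Finset.sum_eq_zero (fun j hj => by rw [hyoff j (Finset.mem_erase.mp hj).1]; ring)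
    rw [h2, zero_add, hy1] at h1
    have h1' : y last ^ 2 = 1 := h1
    rw [← Real.sqrt_sq (hy last), h1', Real.sqrt_one]
  constructor
  · intro j
    by_cases hj : j = last
    · rw [if_pos hj, hj, hax, halast, hblast, hPQ]; ring
    · rw [if_neg hj, hax, hboff j hj, haconst j (Finset.mem_erase.mpr ⟨hj, mem_univ j⟩),
        htdef]
      ring
  · intro j
    by_cases hj : j = last
    · rw [if_pos hj, hj, hylast]
    · rw [if_neg hj, hyoff j hj]

lemma sqrt_mul_self' {A B : ℝ} (hA : 0 ≤ A) (hB : 0 ≤ B) :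
    Real.sqrt A * B = Real.sqrt (A * B^2) := by
  rw [Real.sqrt_mul hA, Real.sqrt_sq hB]

lemma xstar_coord {n : ℕ} (hn : 2 ≤ n) (j : Fin n) :
    ((Real.sqrt ((n : ℝ) / ((n : ℝ) - 1)) •
        (((n : ℝ))⁻¹ • (fun _ : Fin n => (1 : ℝ)) -
          Pi.single (⟨n - 1, Nat.sub_lt (by omega) Nat.one_pos⟩ : Fin n) 1) : Fin n → ℝ)) j
    = if j = (⟨n - 1, Nat.sub_lt (by omega) Nat.one_pos⟩ : Fin n) then -Real.sqrt (1 - 1/(n:ℝ))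
      else Real.sqrt (1 - 1/(n:ℝ)) / ((n:ℝ) - 1) := by
  have hnR : (2:ℝ) ≤ (n:ℝ) := by exact_mod_cast hn
  have h0 : (n:ℝ) ≠ 0 := by linarith
  have h1 : (n:ℝ) - 1 ≠ 0 := by linarith
  have hpos : (0:ℝ) ≤ (n:ℝ)/((n:ℝ)-1) := div_nonneg (by linarith) (by linarith)
  have hq : (0:ℝ) ≤ 1 - 1/(n:ℝ) := by
    rw [sub_nonneg, div_le_one (by linarith)]; linarith
  simp only [Pi.smul_apply, Pi.sub_apply, Pi.single_apply, smul_eq_mul]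
  by_cases hj : j = (⟨n - 1, by omega⟩ : Fin n)
  · rw [if_pos hj, if_pos hj]
    have e : Real.sqrt ((n:ℝ)/((n:ℝ)-1)) * ((n:ℝ)⁻¹ * 1 - 1)
        = -(Real.sqrt ((n:ℝ)/((n:ℝ)-1)) * (1 - 1/(n:ℝ))) := by ring
    rw [e, sqrt_mul_self' hpos hq]
    congr 1
    congr 1
    field_simp
  · rw [if_neg hj, if_neg hj]
    have e : Real.sqrt ((n:ℝ)/((n:ℝ)-1)) * ((n:ℝ)⁻¹ * 1 - 0)
        = Real.sqrt ((n:ℝ)/((n:ℝ)-1)) * ((n:ℝ)⁻¹) := by ring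
    have eL : Real.sqrt ((n:ℝ)/((n:ℝ)-1)) * ((n:ℝ))⁻¹
        = Real.sqrt ((n:ℝ)/((n:ℝ)-1) * (((n:ℝ))⁻¹)^2) :=
      sqrt_mul_self' hpos (inv_nonneg.mpr (by linarith))
    have eR : Real.sqrt (1-1/(n:ℝ)) / ((n:ℝ)-1)
        = Real.sqrt ((1-1/(n:ℝ)) * ((((n:ℝ)-1))⁻¹)^2) := by
      rw [div_eq_mul_inv]
      exact sqrt_mul_self' hq (inv_nonneg.mpr (by linarith))
    rw [e, eL, eR]
    congr 1
    field_simp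

lemma sum_if_last {n : ℕ} (hn : 2 ≤ n) (f : Fin n → ℝ) (A B : ℝ)
    (hf : ∀ j, f j = if j = (⟨n-1, Nat.sub_lt (by omega) Nat.one_pos⟩ : Fin n) then A else B) :
    ∑ j, f j = A + ((n:ℝ) - 1) * B := by
  rw [Finset.sum_congr rfl (fun j _ => hf j),
    ← Finset.sum_erase_add _ _ (mem_univ (⟨n-1, by omega⟩ : Fin n)), if_pos rfl,
    Finset.sum_congr rfl (fun j hj => if_neg (Finset.mem_erase.mp hj).1),
    Finset.sum_const, nsmul_eq_mul,
    Finset.card_erase_of_mem (mem_univ _), card_univ, Fintype.card_fin]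
  have h1 : (1:ℕ) ≤ n := by omega
  push_cast [Nat.cast_sub h1]
  ring

lemma xstar_mem {n : ℕ} (hn : 2 ≤ n) :
    (Real.sqrt ((n : ℝ) / ((n : ℝ) - 1)) •
        (((n : ℝ))⁻¹ • (fun _ : Fin n => (1 : ℝ)) -
          Pi.single (⟨n - 1, Nat.sub_lt (by omega) Nat.one_pos⟩ : Fin n) 1)) ∈ schurCone n := by
  have hnR : (2:ℝ) ≤ (n:ℝ) := by exact_mod_cast hn
  have h1 : (n:ℝ) - 1 ≠ 0 := by linarith
  set t : ℝ := Real.sqrt (1 - 1/(n:ℝ)) / ((n:ℝ) - 1) with htdef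
  have ht0 : 0 ≤ t := div_nonneg (Real.sqrt_nonneg _) (by linarith)
  refine ⟨fun i => ((i:ℕ) + 1 : ℝ) * t, fun i => mul_nonneg (by positivity) ht0, ?_⟩
  funext j
  rw [xstar_coord hn j, schur_coord hn _ j]
  by_cases hj : j = (⟨n - 1, by omega⟩ : Fin n)
  · rw [if_pos hj]
    have hjv : (j:ℕ) = n - 1 := by rw [hj]
    rw [dif_neg (by omega), dif_pos (by omega)]
    have e1 : ((((⟨(j:ℕ)-1, by omega⟩ : Fin (n-1)):ℕ) + 1 : ℝ)) = (n:ℝ) - 1 := by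
      simp only [hjv]
      rw [Nat.cast_sub (show 1 ≤ n - 1 by omega), Nat.cast_sub (show 1 ≤ n by omega)]
      push_cast
      ring
    rw [e1, htdef]
    field_simp
    ring
  · rw [if_neg hj]
    have hjv : (j:ℕ) < n - 1 := by
      have := j.isLt
      have : (j:ℕ) ≠ n - 1 := fun h => hj (Fin.ext (by simp [h]))
      omega
    rw [dif_pos hjv]
    by_cases hj0 : 0 < (j:ℕ)
    · rw [dif_pos hj0]
      have e2 : ((((⟨(j:ℕ)-1, by omega⟩ : Fin (n-1)):ℕ) + 1 : ℝ)) = ((j:ℕ) : ℝ) := by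
        simp only
        push_cast [Nat.cast_sub (show 1 ≤ (j:ℕ) by omega)]
        ring
      simp only
      rw [e2]
      push_cast
      ring
    · rw [dif_neg hj0]
      have : (j:ℕ) = 0 := by omega
      simp only [this]
      push_cast
      ring

lemma vnorm_sq {n : ℕ} (v : Fin n → ℝ) (hv : vnorm v = 1) : ∑ j, v j ^ 2 = 1 := by
  have hdp : v ⬝ᵥ v = ∑ j, v j ^ 2 := by
    simp [dotProduct, pow_two]
  simp only [vnorm] at hv
  rw [← hdp]
  exact Real.sqrt_eq_one.mp hv

end Aux

/-- The maximal angle between the Schur cone and the nonnegative orthant: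
`min ⟨x,y⟩ = −√(1−1/n)`, attained uniquely at `y = e_n`, `x = √(n/(n−1))(e/n − e_n)`. -/
theorem stmt15 {n : ℕ} (hn : 2 ≤ n) :
    (∀ x y : Fin n → ℝ, x ∈ schurCone n → vnorm x = 1 → (∀ j, 0 ≤ y j) → vnorm y = 1 →
      -Real.sqrt (1 - 1 / (n : ℝ)) ≤ x ⬝ᵥ y) ∧
    (Real.sqrt ((n : ℝ) / ((n : ℝ) - 1)) •
        (((n : ℝ))⁻¹ • (fun _ : Fin n => (1 : ℝ)) -
          Pi.single (⟨n - 1, by omega⟩ : Fin n) 1)) ∈ schurCone n ∧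
    vnorm (Real.sqrt ((n : ℝ) / ((n : ℝ) - 1)) •
        (((n : ℝ))⁻¹ • (fun _ : Fin n => (1 : ℝ)) -
          Pi.single (⟨n - 1, by omega⟩ : Fin n) 1)) = 1 ∧
    (∀ j, 0 ≤ (Pi.single (⟨n - 1, by omega⟩ : Fin n) 1 : Fin n → ℝ) j) ∧
    vnorm (Pi.single (⟨n - 1, by omega⟩ : Fin n) 1 : Fin n → ℝ) = 1 ∧
    (Real.sqrt ((n : ℝ) / ((n : ℝ) - 1)) •
        (((n : ℝ))⁻¹ • (fun _ : Fin n => (1 : ℝ)) -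
          Pi.single (⟨n - 1, by omega⟩ : Fin n) 1)) ⬝ᵥ
        (Pi.single (⟨n - 1, by omega⟩ : Fin n) 1 : Fin n → ℝ) =
      -Real.sqrt (1 - 1 / (n : ℝ)) ∧
    (∀ x y : Fin n → ℝ, x ∈ schurCone n → vnorm x = 1 → (∀ j, 0 ≤ y j) → vnorm y = 1 →
      x ⬝ᵥ y = -Real.sqrt (1 - 1 / (n : ℝ)) →
      x = Real.sqrt ((n : ℝ) / ((n : ℝ) - 1)) •
          (((n : ℝ))⁻¹ • (fun _ : Fin n => (1 : ℝ)) -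
            Pi.single (⟨n - 1, by omega⟩ : Fin n) 1) ∧
      y = (Pi.single (⟨n - 1, by omega⟩ : Fin n) 1 : Fin n → ℝ)) := by
  have hnR : (2:ℝ) ≤ (n:ℝ) := by exact_mod_cast hn
  have hn0 : (0:ℝ) < (n:ℝ) := by linarith
  have hm0 : (0:ℝ) < (n:ℝ) - 1 := by linarith
  have hq : (0:ℝ) ≤ 1 - 1/(n:ℝ) := by
    rw [sub_nonneg, div_le_one hn0]; linarith
  have hQQ : Real.sqrt (1 - 1/(n:ℝ)) * Real.sqrt (1 - 1/(n:ℝ)) = 1 - 1/(n:ℝ) :=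
    Real.mul_self_sqrt hq
  refine ⟨?_, xstar_mem hn, ?_, ?_, ?_, ?_, ?_⟩
  · -- the bound
    intro x y hx hxn hy hyn
    obtain ⟨hsum, hbd, hlast⟩ := schur_facts hn hx
    exact (key hn x y hsum hbd hlast (vnorm_sq x hxn) hy (vnorm_sq y hyn)).1
  · -- norm of xstar
    simp only [vnorm]
    rw [Real.sqrt_eq_one]
    show ∑ j, _ * _ = 1
    rw [sum_if_last hn _
        ((-Real.sqrt (1 - 1/(n:ℝ))) * (-Real.sqrt (1 - 1/(n:ℝ))))
        ((Real.sqrt (1 - 1/(n:ℝ)) / ((n:ℝ) - 1)) * (Real.sqrt (1 - 1/(n:ℝ)) / ((n:ℝ) - 1)))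
        (fun j => by
          rw [xstar_coord hn j]
          by_cases hj : j = (⟨n - 1, by omega⟩ : Fin n)
          · rw [if_pos hj, if_pos hj]
          · rw [if_neg hj, if_neg hj])]
    have h1 : (n:ℝ) ≠ 0 := by positivity
    have h2 : (n:ℝ) - 1 ≠ 0 := by linarith
    rw [neg_mul_neg, div_mul_div_comm, hQQ]
    field_simp
    ring
  · -- y* nonneg
    intro j
    rw [Pi.single_apply]
    split_ifs <;> norm_num
  · -- norm of y*
    simp only [vnorm]
    rw [Real.sqrt_eq_one]
    show ∑ j, _ * _ = 1
    have h : ∀ j : Fin n, (Pi.single (⟨n - 1, by omega⟩ : Fin n) 1 : Fin n → ℝ) j *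
        (Pi.single (⟨n - 1, by omega⟩ : Fin n) 1 : Fin n → ℝ) j
        = if j = (⟨n - 1, by omega⟩ : Fin n) then (1:ℝ) else 0 := by
      intro j
      rw [Pi.single_apply]
      split_ifs <;> norm_num
    rw [Finset.sum_congr rfl (fun j _ => h j), Finset.sum_ite_eq' Finset.univ _ (fun _ => (1:ℝ))]
    simp
  · -- dot product value
    show ∑ j, _ * _ = _
    have h : ∀ j : Fin n,
        ((Real.sqrt ((n : ℝ) / ((n : ℝ) - 1)) •
          (((n : ℝ))⁻¹ • (fun _ : Fin n => (1 : ℝ)) -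
            Pi.single (⟨n - 1, by omega⟩ : Fin n) 1) : Fin n → ℝ)) j *
          (Pi.single (⟨n - 1, by omega⟩ : Fin n) 1 : Fin n → ℝ) j
        = if j = (⟨n - 1, by omega⟩ : Fin n) then
            ((Real.sqrt ((n : ℝ) / ((n : ℝ) - 1)) •
              (((n : ℝ))⁻¹ • (fun _ : Fin n => (1 : ℝ)) -
                Pi.single (⟨n - 1, by omega⟩ : Fin n) 1) : Fin n → ℝ)) j
          else 0 := by
      intro j
      rw [Pi.single_apply]
      split_ifs <;> ring
    rw [Finset.sum_congr rfl (fun j _ => h j), Finset.sum_ite_eq' Finset.univ _]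
    rw [if_pos (Finset.mem_univ _), xstar_coord hn _, if_pos rfl]
  · -- uniqueness
    intro x y hx hxn hy hyn heq
    obtain ⟨hsum, hbd, hlast⟩ := schur_facts hn hx
    obtain ⟨hxc, hyc⟩ :=
      (key hn x y hsum hbd hlast (vnorm_sq x hxn) hy (vnorm_sq y hyn)).2 heq
    constructor
    · funext j
      rw [hxc j]
      exact (xstar_coord hn j).symm
    · funext j
      rw [hyc j, Pi.single_apply]
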